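/- Let (p*, p⁺*, p⁻*, x*) be an optimal solution of the L-ESM subproblem and set X* = Σ_{m∈U} x_m*. If for some m ∈ U one has p_m⁺* = 0, p_m⁻* = 0, and 0 < p_m* < p̄_m, then p_m* = x_m* + D_m, the Mode-1 stationarity relation c_m(x_m* + D_m) + b_m − w⁰ + a·X* + a·x_m* = 0 holds, and moreover w⁻ ≤ c_m·p_m* + b_m ≤ w⁺, so that α_m ≤ x_m* ≤ β_m. -/
import Mathlib


open Finset

variable {U : Type*} [Fintype U]

/-- A point `(p, p⁺, p⁻, x)` is feasible for the L-ESM subproblem: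
power balance, generator bounds, and nonnegativity of grid trades. -/
def Feasible (D pbar : U → ℝ) (p pp pm x : U → ℝ) : Prop :=
  ∀ m : U, D m + x m + pm m = p m + pp m ∧
    0 ≤ p m ∧ p m ≤ pbar m ∧ 0 ≤ pp m ∧ 0 ≤ pm m

/-- Objective of the L-ESM subproblem at base price `w0`. -/
noncomputable def Objective (c b : U → ℝ) (wplus wminus a w0 : ℝ)
    (p pp pm x : U → ℝ) : ℝ :=
  (∑ m : U, (c m / 2 * (p m) ^ 2 + b m * p m + wplus * pp m
      - wminus * pm m - w0 * x m))
    + a / 2 * ∑ m : U, (x m) ^ 2 + a / 2 * (∑ m : U, x m) ^ 2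

/-- `(p, p⁺, p⁻, x)` is an optimal solution of the L-ESM subproblem. -/
noncomputable def IsOptimal (c b D pbar : U → ℝ) (wplus wminus a w0 : ℝ)
    (p pp pm x : U → ℝ) : Prop :=
  Feasible D pbar p pp pm x ∧
    ∀ q qp qm y : U → ℝ, Feasible D pbar q qp qm y →
      Objective c b wplus wminus a w0 p pp pm x ≤
        Objective c b wplus wminus a w0 q qp qm y

lemma sum_delta [DecidableEq U] (f g : U → ℝ) (m : U)
    (h : ∀ j, j ≠ m → f j = g j) : ∑ j : U, f j = f m - g m + ∑ j : U, g j := by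
  rw [← Finset.add_sum_erase _ f (Finset.mem_univ m),
      ← Finset.add_sum_erase _ g (Finset.mem_univ m),
      Finset.sum_congr rfl (fun j hj => h j (Finset.ne_of_mem_erase hj))]
  ring

lemma obj_update [DecidableEq U] (c b : U → ℝ) (wplus wminus a w0 : ℝ) (p pp pm x : U → ℝ)
    (m : U) (P PP PM X : ℝ) :
    Objective c b wplus wminus a w0 (Function.update p m P)
      (Function.update pp m PP) (Function.update pm m PM) (Function.update x m X)
    = Objective c b wplus wminus a w0 p pp pm x
      + ((c m / 2 * P ^ 2 + b m * P + wplus * PP - wminus * PM - w0 * X)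
        - (c m / 2 * (p m) ^ 2 + b m * (p m) + wplus * pp m - wminus * pm m - w0 * x m))
      + a / 2 * (X ^ 2 - (x m) ^ 2)
      + a / 2 * ((∑ j : U, x j + (X - x m)) ^ 2 - (∑ j : U, x j) ^ 2) := by
  unfold Objective
  rw [sum_delta (fun j => c j / 2 * (Function.update p m P j) ^ 2
        + b j * (Function.update p m P j) + wplus * Function.update pp m PP j
        - wminus * Function.update pm m PM j - w0 * Function.update x m X j)
      (fun j => c j / 2 * (p j) ^ 2 + b j * p j + wplus * pp j - wminus * pm j - w0 * x j)
      m (fun j hj => by simp [Function.update_of_ne hj]),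
    sum_delta (fun j => (Function.update x m X j) ^ 2) (fun j => (x j) ^ 2) m
      (fun j hj => by simp [Function.update_of_ne hj]),
    sum_delta (fun j => Function.update x m X j) x m
      (fun j hj => by simp [Function.update_of_ne hj])]
  simp only [Function.update_self]
  ring

lemma quad_key {K A ε : ℝ} (hA : 0 < A) (hε : 0 < ε)
    (h : ∀ t, 0 < t → t ≤ ε → 0 ≤ K * t + A * t ^ 2) : 0 ≤ K := by
  by_contra hK
  push_neg at hK
  have ht : 0 < min ε (-K / (2 * A)) := lt_min hε (div_pos (by linarith) (by linarith))
  have h1 := h _ ht (min_le_left _ _)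
  have h2 : min ε (-K / (2 * A)) ≤ -K / (2 * A) := min_le_right _ _
  have h3 : min ε (-K / (2 * A)) * (2 * A) ≤ -K :=
    (le_div_iff₀ (by positivity)).mp h2
  nlinarith [mul_pos ht ht, mul_pos ht hA]

set_option maxHeartbeats 1000000 in
/-- if `p⁺_m = 0`, `p⁻_m = 0` and `0 < p_m < p̄_m` at an optimum,
then prosumer `m` is in Mode 1: `p_m = x_m + D_m`, the Mode-1 stationarity
relation holds, `w⁻ ≤ c_m p_m + b_m ≤ w⁺`, and `α_m ≤ x_m ≤ β_m`. -/
theorem lesm_mode1_characterization [Nonempty U]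
    (c b D pbar : U → ℝ) (wplus wminus a w0 : ℝ)
    (hc : ∀ m, 0 < c m) (hpbar : ∀ m, 0 ≤ pbar m)
    (hb : ∀ m, 0 < b m) (hbw : ∀ m, b m < wminus)
    (hw : wminus < wplus) (ha : 0 < a)
    (p pp pm x : U → ℝ)
    (hopt : IsOptimal c b D pbar wplus wminus a w0 p pp pm x)
    (m : U) (hppm : pp m = 0) (hpmm : pm m = 0)
    (hlb : 0 < p m) (hub : p m < pbar m) :
    p m = x m + D m ∧
    c m * (x m + D m) + b m - w0 + a * (∑ j : U, x j) + a * x m = 0 ∧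
    (wminus ≤ c m * p m + b m ∧ c m * p m + b m ≤ wplus) ∧
    ((wminus - b m) / c m - D m ≤ x m ∧ x m ≤ (wplus - b m) / c m - D m) := by
  classical
  obtain ⟨hfeas, hmin⟩ := hopt
  obtain ⟨hbal, _, _, _, _⟩ := hfeas m
  rw [hppm, hpmm] at hbal
  have hpx : p m = x m + D m := by linarith
  set S := ∑ j : U, x j with hS
  -- generic perturbation inequality: change (p m, pp m, pm m, x m) to
  -- (p m + dp, PP, PM, x m + dx)
  have pert : ∀ dp PP PM dx : ℝ,
      D m + (x m + dx) + PM = (p m + dp) + PP →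
      0 ≤ p m + dp → p m + dp ≤ pbar m → 0 ≤ PP → 0 ≤ PM →
      0 ≤ (c m / 2 * (p m + dp) ^ 2 + b m * (p m + dp) + wplus * PP - wminus * PM
            - w0 * (x m + dx))
        - (c m / 2 * (p m) ^ 2 + b m * (p m) - w0 * x m)
        + a / 2 * ((x m + dx) ^ 2 - (x m) ^ 2)
        + a / 2 * ((S + dx) ^ 2 - S ^ 2) := by
    intro dp PP PM dx hbal' h1 h2 h3 h4
    have hfeas' : Feasible D pbar (Function.update p m (p m + dp))
        (Function.update pp m PP) (Function.update pm m PM)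
        (Function.update x m (x m + dx)) := by
      intro j
      by_cases hj : j = m
      · subst hj
        simp only [Function.update_self]
        exact ⟨hbal', h1, h2, h3, h4⟩
      · simp only [Function.update_of_ne hj]
        exact hfeas j
    have := hmin _ _ _ _ hfeas'
    rw [obj_update] at this
    rw [hppm, hpmm] at this
    have : 0 ≤ ((c m / 2 * (p m + dp) ^ 2 + b m * (p m + dp) + wplus * PP - wminus * PM
            - w0 * (x m + dx))
        - (c m / 2 * (p m) ^ 2 + b m * (p m) + wplus * 0 - wminus * 0 - w0 * x m))
        + a / 2 * ((x m + dx) ^ 2 - (x m) ^ 2)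
        + a / 2 * ((S + ((x m + dx) - x m)) ^ 2 - S ^ 2) := by linarith
    have h5 : (x m + dx) - x m = dx := by ring
    rw [h5] at this
    linarith
  -- Stationarity
  set K := c m * p m + b m - w0 + a * S + a * x m with hK
  have hK1 : 0 ≤ K := by
    apply quad_key (A := c m / 2 + a) (ε := pbar m - p m) (by have := hc m; linarith) (by linarith)
    intro t ht1 ht2
    have := pert t 0 0 t (by linarith) (by linarith) (by linarith) le_rfl le_rfl
    nlinarith [this]
  have hK2 : K ≤ 0 := by
    have : 0 ≤ -K := by
      apply quad_key (A := c m / 2 + a) (ε := p m) (by have := hc m; linarith) hlb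
      intro t ht1 ht2
      have := pert (-t) 0 0 (-t) (by linarith) (by linarith) (by linarith) le_rfl le_rfl
      nlinarith [this]
    linarith
  have hKeq : K = 0 := le_antisymm hK2 hK1
  -- wminus ≤ c p + b
  have hwm : wminus ≤ c m * p m + b m := by
    have h1 : 0 ≤ c m * p m + b m - wminus := by
      apply quad_key (A := c m / 2) (ε := pbar m - p m) (by have := hc m; linarith) (by linarith)
      intro t ht1 ht2
      have := pert t 0 t 0 (by linarith) (by linarith) (by linarith) le_rfl (by linarith)
      nlinarith [this]
    linarith
  -- c p + b ≤ wplus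
  have hwp : c m * p m + b m ≤ wplus := by
    have h1 : 0 ≤ wplus - b m - c m * p m := by
      apply quad_key (A := c m / 2) (ε := p m) (by have := hc m; linarith) hlb
      intro t ht1 ht2
      have := pert (-t) t 0 0 (by linarith) (by linarith) (by linarith) (by linarith) le_rfl
      nlinarith [this]
    linarith
  refine ⟨hpx, ?_, ⟨hwm, hwp⟩, ?_, ?_⟩
  · rw [← hpx]; rw [hK] at hKeq; linarith
  · have : (wminus - b m) / c m ≤ x m + D m := by
      rw [div_le_iff₀ (hc m)]
      rw [hpx] at hwm
      nlinarith
    linarith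
  · have : x m + D m ≤ (wplus - b m) / c m := by
      rw [le_div_iff₀ (hc m)]
      rw [hpx] at hwp
      nlinarith
    linarith
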